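/- arXiv:1602.06464 — 2 statements merged into one kernel-verified Lean document; each statement's English description precedes it below -/
import Mathlib

section
/- Let a : ℕ → ℂ be completely multiplicative and λ : ℕ → ℝ be completely additive, and let s ∈ ℂ be such that the series ∑_{n≥1} |a(n)|·exp(−λ(n)·Re(s)) converges. Then the value of the general Dirichlet series at s is nonzero: ∑_{n=1}^∞ a(n)·exp(−λ(n)·s) ≠ 0. -/
/-- At a point of absolute convergence, a general Dirichlet series with
completely multiplicative coefficients and completely additive exponents
does not vanish. -/
theorem general_dirichlet_series_ne_zero
    (a : ℕ → ℂ) (l : ℕ → ℝ)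
    (ha1 : a 1 = 1)
    (haMul : ∀ m n : ℕ, 1 ≤ m → 1 ≤ n → a (m * n) = a m * a n)
    (hl1 : l 1 = 0)
    (hlAdd : ∀ m n : ℕ, 1 ≤ m → 1 ≤ n → l (m * n) = l m + l n)
    (s : ℂ)
    (hsum : Summable fun n : ℕ => ‖a (n + 1)‖ * Real.exp (-(l (n + 1)) * s.re)) :
    (∑' n : ℕ, a (n + 1) * Complex.exp (-(l (n + 1) : ℂ) * s)) ≠ 0 := by
  set f : ℕ →*₀ ℂ :=
    { toFun := fun n => if n = 0 then 0 else a n * Complex.exp (-(l n : ℂ) * s)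
      map_zero' := by simp
      map_one' := by simp [ha1, hl1]
      map_mul' := by
        intro m n
        rcases Nat.eq_zero_or_pos m with hm | hm
        · simp [hm]
        rcases Nat.eq_zero_or_pos n with hn | hn
        · simp [hn]
        have hmn : m * n ≠ 0 := by positivity
        simp only [hmn, hm.ne', hn.ne', if_false, haMul m n hm hn, hlAdd m n hm hn]
        push_cast
        rw [neg_add, add_mul, Complex.exp_add]
        ring } with hf
  have hnorm : ∀ n : ℕ, ‖f (n + 1)‖ = ‖a (n + 1)‖ * Real.exp (-(l (n + 1)) * s.re) := by
    intro n
    simp only [hf, MonoidWithZeroHom.coe_mk, ZeroHom.coe_mk, Nat.succ_ne_zero, if_false,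
      norm_mul, Complex.norm_exp]
    congr 2
    simp [Complex.mul_re]
  have hsum' : Summable fun n : ℕ => ‖f n‖ := by
    rw [← summable_nat_add_iff 1]
    simpa only [hnorm] using hsum
  have key := EulerProduct.exp_tsum_primes_log_eq_tsum hsum'
  have htsum : (∑' n : ℕ, f n) = ∑' n : ℕ, a (n + 1) * Complex.exp (-(l (n + 1) : ℂ) * s) := by
    rw [Summable.tsum_eq_zero_add hsum'.of_norm]
    simp [hf]
  rw [htsum] at key
  rw [← key]
  exact Complex.exp_ne_zero _
end

section
/- The non-trivial zeros of the Davenport–Heilbronn function f are symmetric with respect to the critical line Re(s) = 1/2: if s₀ ∈ ℂ satisfies 0 < Re(s₀) < 1 and f(s₀) = 0, then f(1 − conj(s₀)) = 0, where conj denotes complex conjugation. -/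
open Complex Filter Topology

private lemma aux_diff_conj {f : ℂ → ℂ} (hf : Differentiable ℂ f) :
    Differentiable ℂ fun z => (starRingEnd ℂ) (f ((starRingEnd ℂ) z)) := by
  intro z
  have h := (hf ((starRingEnd ℂ) z)).hasDerivAt
  rw [hasDerivAt_iff_tendsto_slope] at h
  refine HasDerivAt.differentiableAt (f' := (starRingEnd ℂ) (deriv f ((starRingEnd ℂ) z))) ?_
  rw [hasDerivAt_iff_tendsto_slope]
  have hconj : Tendsto (fun w : ℂ => (starRingEnd ℂ) w) (𝓝[≠] z) (𝓝[≠] ((starRingEnd ℂ) z)) := by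
    apply tendsto_nhdsWithin_of_tendsto_nhds_of_eventually_within
    · exact (continuous_conj.tendsto z).mono_left nhdsWithin_le_nhds
    · filter_upwards [self_mem_nhdsWithin] with w hw
      simp only [Set.mem_compl_iff, Set.mem_singleton_iff] at hw ⊢
      exact fun hc => hw ((starRingEnd ℂ).injective hc)
  have := (Complex.continuous_conj.tendsto _).comp (h.comp hconj)
  refine this.congr fun w => ?_
  simp only [Function.comp_apply, slope_def_field]
  rw [map_div₀, map_sub, map_sub, conj_conj, conj_conj]

private lemma aux_LFunction_conj {N : ℕ} [NeZero N] (χ ψ : DirichletCharacter ℂ N)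
    (hχ1 : χ ≠ 1) (hψ1 : ψ ≠ 1)
    (h : ∀ n : ZMod N, ψ n = (starRingEnd ℂ) (χ n)) (s : ℂ) :
    DirichletCharacter.LFunction ψ s
      = (starRingEnd ℂ) (DirichletCharacter.LFunction χ ((starRingEnd ℂ) s)) := by
  have hana1 : AnalyticOnNhd ℂ (DirichletCharacter.LFunction ψ) Set.univ :=
    (DirichletCharacter.differentiable_LFunction hψ1).differentiableOn.analyticOnNhd isOpen_univ
  have hana2 : AnalyticOnNhd ℂ
      (fun z => (starRingEnd ℂ) (DirichletCharacter.LFunction χ ((starRingEnd ℂ) z))) Set.univ :=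
    (aux_diff_conj (DirichletCharacter.differentiable_LFunction hχ1)).differentiableOn.analyticOnNhd
      isOpen_univ
  have key : Set.EqOn (DirichletCharacter.LFunction ψ)
      (fun z => (starRingEnd ℂ) (DirichletCharacter.LFunction χ ((starRingEnd ℂ) z)))
      Set.univ := by
    refine hana1.eqOn_of_preconnected_of_eventuallyEq hana2 isPreconnected_univ
      (Set.mem_univ (2:ℂ)) ?_
    have hmem : {z : ℂ | 1 < z.re} ∈ 𝓝 (2:ℂ) :=
      (continuous_re.isOpen_preimage _ isOpen_Ioi).mem_nhds (by norm_num)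
    filter_upwards [hmem] with z hz
    have hz' : 1 < ((starRingEnd ℂ) z).re := by simpa using hz
    rw [DirichletCharacter.LFunction_eq_LSeries ψ hz,
      DirichletCharacter.LFunction_eq_LSeries χ hz', LSeries, LSeries,
      starRingEnd_apply, tsum_star]
    congr 1
    ext n
    rcases eq_or_ne n 0 with rfl | hn
    · simp [LSeries.term_zero]
    · rw [LSeries.term_of_ne_zero hn, LSeries.term_of_ne_zero hn]
      have harg : ((n:ℂ)).arg ≠ Real.pi := by
        rw [natCast_arg]; exact Real.pi_ne_zero.symm
      have hpow : (starRingEnd ℂ) ((n:ℂ) ^ ((starRingEnd ℂ) z)) = (n:ℂ) ^ z := by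
        have := Complex.conj_cpow (n:ℂ) z harg
        rw [conj_natCast] at this
        exact this.symm
      rw [← starRingEnd_apply, map_div₀, hpow, h]
  exact key (Set.mem_univ s)

private lemma chi_vals (χ : DirichletCharacter ℂ 5) (hχ : χ 2 = I) :
    χ 0 = 0 ∧ χ 1 = 1 ∧ χ 3 = -I ∧ χ 4 = -1 := by
  have h0 : χ 0 = 0 := χ.map_nonunit (by decide)
  have h4 : χ 4 = -1 := by
    have h : (4 : ZMod 5) = 2 * 2 := by decide
    rw [h, map_mul, hχ, I_mul_I]
  have h3 : χ 3 = -I := by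
    have h : (3 : ZMod 5) = 2 * 4 := by decide
    rw [h, map_mul, hχ, h4]; ring
  exact ⟨h0, map_one χ, h3, h4⟩

private lemma chibar_eq_inv (χ χbar : DirichletCharacter ℂ 5) (hχ : χ 2 = I)
    (hbar : ∀ n : ZMod 5, χbar n = (starRingEnd ℂ) (χ n)) : χ⁻¹ = χbar := by
  obtain ⟨h0, h1, h3, h4⟩ := chi_vals χ hχ
  refine MulChar.ext' fun a => ?_
  rw [MulChar.inv_apply_eq_inv' χ a, hbar a]
  fin_cases a
  · show (χ 0)⁻¹ = (starRingEnd ℂ) (χ 0)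
    rw [h0]; simp
  · show (χ 1)⁻¹ = (starRingEnd ℂ) (χ 1)
    rw [h1]; simp
  · show (χ 2)⁻¹ = (starRingEnd ℂ) (χ 2)
    rw [hχ]; simp
  · show (χ 3)⁻¹ = (starRingEnd ℂ) (χ 3)
    rw [h3]; simp [inv_neg, inv_I]
  · show (χ 4)⁻¹ = (starRingEnd ℂ) (χ 4)
    rw [h4]; norm_num

private lemma chi_primitive (χ : DirichletCharacter ℂ 5) (h2 : χ 2 ≠ 1) : χ.IsPrimitive := by
  have hne : χ ≠ 1 := fun h => h2 (by rw [h]; exact MulChar.one_apply (by decide))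
  rcases Nat.prime_five.eq_one_or_self_of_dvd _ (DirichletCharacter.conductor_dvd_level χ)
    with h | h
  · exact absurd (DirichletCharacter.eq_one_iff_conductor_eq_one.mpr h) hne
  · exact h

private lemma gauss_chi (χ : DirichletCharacter ℂ 5) (hχ : χ 2 = I) :
    gaussSum χ ZMod.stdAddChar
      = -((2 * Real.sin (Real.pi/5) : ℝ) : ℂ)
        + ((2 * Real.sin (2*Real.pi/5) : ℝ) : ℂ) * I := by
  obtain ⟨h0, h1, h3, h4⟩ := chi_vals χ hχ
  have E : ∀ k : ℕ, ZMod.stdAddChar ((k : ZMod 5))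
      = ((Real.cos (2*Real.pi*k/5) : ℝ) : ℂ) + ((Real.sin (2*Real.pi*k/5) : ℝ) : ℂ) * I := by
    intro k
    have h := ZMod.stdAddChar_coe (N := 5) (k : ℤ)
    rw [Int.cast_natCast] at h
    rw [h, show (2 * (Real.pi:ℂ) * I * ((k:ℤ):ℂ) / ((5:ℕ):ℂ)) = ((2*Real.pi*k/5 : ℝ) : ℂ) * I by
      push_cast; ring, Complex.exp_mul_I, ← Complex.ofReal_cos, ← Complex.ofReal_sin]
  have hsum : gaussSum χ ZMod.stdAddChar
      = χ 0 * ZMod.stdAddChar (0 : ZMod 5) + χ 1 * ZMod.stdAddChar (1 : ZMod 5)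
        + χ 2 * ZMod.stdAddChar (2 : ZMod 5) + χ 3 * ZMod.stdAddChar (3 : ZMod 5)
        + χ 4 * ZMod.stdAddChar (4 : ZMod 5) := by
    rw [gaussSum, show (Finset.univ : Finset (ZMod 5)) = {0, 1, 2, 3, 4} from by decide]
    rw [Finset.sum_insert (by decide), Finset.sum_insert (by decide),
      Finset.sum_insert (by decide), Finset.sum_insert (by decide), Finset.sum_singleton]
    ring
  have E1 := E 1; have E2 := E 2; have E3 := E 3; have E4 := E 4
  simp only [Nat.cast_one, Nat.cast_ofNat] at E1 E2 E3 E4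
  rw [hsum, h0, h1, hχ, h3, h4, E1, E2, E3, E4]
  rw [mul_one] at *
  have hc2 : Real.cos (2*Real.pi*2/5) = -Real.cos (Real.pi/5) := by
    rw [show (2*Real.pi*2/5 : ℝ) = Real.pi - Real.pi/5 by ring, Real.cos_pi_sub]
  have hs2 : Real.sin (2*Real.pi*2/5) = Real.sin (Real.pi/5) := by
    rw [show (2*Real.pi*2/5 : ℝ) = Real.pi - Real.pi/5 by ring, Real.sin_pi_sub]
  have hc3 : Real.cos (2*Real.pi*3/5) = -Real.cos (Real.pi/5) := by
    rw [show (2*Real.pi*3/5 : ℝ) = Real.pi/5 + Real.pi by ring, Real.cos_add_pi]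
  have hs3 : Real.sin (2*Real.pi*3/5) = -Real.sin (Real.pi/5) := by
    rw [show (2*Real.pi*3/5 : ℝ) = Real.pi/5 + Real.pi by ring, Real.sin_add_pi]
  have hc4 : Real.cos (2*Real.pi*4/5) = Real.cos (2*Real.pi/5) := by
    rw [show (2*Real.pi*4/5 : ℝ) = 2*Real.pi - 2*Real.pi/5 by ring, Real.cos_two_pi_sub]
  have hs4 : Real.sin (2*Real.pi*4/5) = -Real.sin (2*Real.pi/5) := by
    rw [show (2*Real.pi*4/5 : ℝ) = 2*Real.pi - 2*Real.pi/5 by ring, Real.sin_two_pi_sub]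
  rw [hc2, hs2, hc3, hs3, hc4, hs4]
  push_cast
  ring_nf
  rw [Complex.I_sq]
  ring

private lemma gauss_chibar (χ χbar : DirichletCharacter ℂ 5) (hχ : χ 2 = I)
    (hbar : ∀ n : ZMod 5, χbar n = (starRingEnd ℂ) (χ n)) :
    gaussSum χbar ZMod.stdAddChar
      = ((2 * Real.sin (Real.pi/5) : ℝ) : ℂ)
        + ((2 * Real.sin (2*Real.pi/5) : ℝ) : ℂ) * I := by
  obtain ⟨h0, h1, h3, h4⟩ := chi_vals χ hχ
  have b0 : χbar 0 = 0 := by rw [hbar, h0]; simp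
  have b1 : χbar 1 = 1 := by rw [hbar, h1]; simp
  have b2 : χbar 2 = -I := by rw [hbar, hχ]; simp
  have b3 : χbar 3 = I := by rw [hbar, h3]; simp
  have b4 : χbar 4 = -1 := by rw [hbar, h4]; simp
  have E : ∀ k : ℕ, ZMod.stdAddChar ((k : ZMod 5))
      = ((Real.cos (2*Real.pi*k/5) : ℝ) : ℂ) + ((Real.sin (2*Real.pi*k/5) : ℝ) : ℂ) * I := by
    intro k
    have h := ZMod.stdAddChar_coe (N := 5) (k : ℤ)
    rw [Int.cast_natCast] at h
    rw [h, show (2 * (Real.pi:ℂ) * I * ((k:ℤ):ℂ) / ((5:ℕ):ℂ)) = ((2*Real.pi*k/5 : ℝ) : ℂ) * I by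
      push_cast; ring, Complex.exp_mul_I, ← Complex.ofReal_cos, ← Complex.ofReal_sin]
  have hsum : gaussSum χbar ZMod.stdAddChar
      = χbar 0 * ZMod.stdAddChar (0 : ZMod 5) + χbar 1 * ZMod.stdAddChar (1 : ZMod 5)
        + χbar 2 * ZMod.stdAddChar (2 : ZMod 5) + χbar 3 * ZMod.stdAddChar (3 : ZMod 5)
        + χbar 4 * ZMod.stdAddChar (4 : ZMod 5) := by
    rw [gaussSum, show (Finset.univ : Finset (ZMod 5)) = {0, 1, 2, 3, 4} from by decide]
    rw [Finset.sum_insert (by decide), Finset.sum_insert (by decide),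
      Finset.sum_insert (by decide), Finset.sum_insert (by decide), Finset.sum_singleton]
    ring
  have E1 := E 1; have E2 := E 2; have E3 := E 3; have E4 := E 4
  simp only [Nat.cast_one, Nat.cast_ofNat] at E1 E2 E3 E4
  rw [hsum, b0, b1, b2, b3, b4, E1, E2, E3, E4]
  rw [mul_one] at *
  have hc2 : Real.cos (2*Real.pi*2/5) = -Real.cos (Real.pi/5) := by
    rw [show (2*Real.pi*2/5 : ℝ) = Real.pi - Real.pi/5 by ring, Real.cos_pi_sub]
  have hs2 : Real.sin (2*Real.pi*2/5) = Real.sin (Real.pi/5) := by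
    rw [show (2*Real.pi*2/5 : ℝ) = Real.pi - Real.pi/5 by ring, Real.sin_pi_sub]
  have hc3 : Real.cos (2*Real.pi*3/5) = -Real.cos (Real.pi/5) := by
    rw [show (2*Real.pi*3/5 : ℝ) = Real.pi/5 + Real.pi by ring, Real.cos_add_pi]
  have hs3 : Real.sin (2*Real.pi*3/5) = -Real.sin (Real.pi/5) := by
    rw [show (2*Real.pi*3/5 : ℝ) = Real.pi/5 + Real.pi by ring, Real.sin_add_pi]
  have hc4 : Real.cos (2*Real.pi*4/5) = Real.cos (2*Real.pi/5) := by
    rw [show (2*Real.pi*4/5 : ℝ) = 2*Real.pi - 2*Real.pi/5 by ring, Real.cos_two_pi_sub]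
  have hs4 : Real.sin (2*Real.pi*4/5) = -Real.sin (2*Real.pi/5) := by
    rw [show (2*Real.pi*4/5 : ℝ) = 2*Real.pi - 2*Real.pi/5 by ring, Real.sin_two_pi_sub]
  rw [hc2, hs2, hc3, hs3, hc4, hs4]
  push_cast
  ring_nf
  rw [Complex.I_sq]
  ring

private lemma kappa_eqs :
    (((Real.sqrt (10 - 2 * Real.sqrt 5) - 2) / (Real.sqrt 5 - 1)) * Real.sin (2*Real.pi/5)
        - Real.sin (Real.pi/5)
      = -(((Real.sqrt (10 - 2 * Real.sqrt 5) - 2) / (Real.sqrt 5 - 1)) * Real.sqrt 5 / 2))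
    ∧ (Real.sin (2*Real.pi/5)
        + ((Real.sqrt (10 - 2 * Real.sqrt 5) - 2) / (Real.sqrt 5 - 1)) * Real.sin (Real.pi/5)
      = Real.sqrt 5 / 2) := by
  set r := Real.sqrt 5 with hrdef
  have hr5 : r ^ 2 = 5 := Real.sq_sqrt (by norm_num)
  have hr2 : 2 < r := by
    nlinarith [Real.sqrt_nonneg 5, hr5]
  have hr3 : r < 3 := by nlinarith [Real.sqrt_nonneg 5]
  set q := Real.sqrt (10 - 2 * r) with hqdef
  have hq0 : 0 ≤ q := Real.sqrt_nonneg _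
  have hq2 : q ^ 2 = 10 - 2 * r := Real.sq_sqrt (by nlinarith)
  have hc : Real.cos (Real.pi / 5) = (1 + r) / 4 := Real.cos_pi_div_five
  have hs1sq : Real.sin (Real.pi/5) ^ 2 = (10 - 2*r)/16 := by
    have := Real.sin_sq_add_cos_sq (Real.pi/5)
    rw [hc] at this; nlinarith
  have hs1pos : 0 < Real.sin (Real.pi/5) :=
    Real.sin_pos_of_pos_of_lt_pi (by positivity) (by nlinarith [Real.pi_pos])
  have hs1 : Real.sin (Real.pi/5) = q / 4 := by nlinarith [hs1sq, hq2, hs1pos, hq0]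
  have hs2 : Real.sin (2*Real.pi/5) = 2 * (q/4) * ((1+r)/4) := by
    rw [show (2*Real.pi/5 : ℝ) = 2*(Real.pi/5) by ring, Real.sin_two_mul, hs1, hc]
  have hr1 : r - 1 ≠ 0 := by nlinarith
  constructor
  · rw [hs1, hs2]
    field_simp
    ring_nf
    nlinarith [hq2, hr5, sq_nonneg q, sq_nonneg r]
  · rw [hs1, hs2]
    field_simp
    ring_nf
    nlinarith [hq2, hr5, sq_nonneg q, sq_nonneg r]

private lemma sqrt5_pow : ((5:ℕ):ℂ) ^ (1/2 : ℂ) = ((Real.sqrt 5 : ℝ) : ℂ) := by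
  rw [Real.sqrt_eq_rpow, Complex.ofReal_cpow (by norm_num) (1/2)]
  norm_num

private lemma key_tau (κ : ℝ)
    (hκ : κ = (Real.sqrt (10 - 2 * Real.sqrt 5) - 2) / (Real.sqrt 5 - 1)) :
    ((1 - I * (κ:ℂ)) / 2) * (-((2 * Real.sin (Real.pi/5) : ℝ) : ℂ)
        + ((2 * Real.sin (2*Real.pi/5) : ℝ) : ℂ) * I)
      = ((1 + I * (κ:ℂ)) / 2) * (I * ((Real.sqrt 5 : ℝ) : ℂ)) := by
  obtain ⟨h1, h2⟩ := kappa_eqs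
  rw [← hκ] at h1 h2
  have h1c := congrArg (Complex.ofReal) h1
  have h2c := congrArg (Complex.ofReal) h2
  simp only [Complex.ofReal_sub, Complex.ofReal_add, Complex.ofReal_mul, Complex.ofReal_div,
    Complex.ofReal_neg, Complex.ofReal_ofNat] at h1c h2c
  simp only [Complex.ofReal_mul, Complex.ofReal_ofNat]
  linear_combination h1c + I * h2c
    - ((κ:ℂ) * ((Real.sin (2*Real.pi/5) : ℝ) : ℂ)
      + (κ:ℂ) * ((Real.sqrt 5 : ℝ) : ℂ)/2) * Complex.I_sq

private lemma key_tau' (κ : ℝ)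
    (hκ : κ = (Real.sqrt (10 - 2 * Real.sqrt 5) - 2) / (Real.sqrt 5 - 1)) :
    ((1 + I * (κ:ℂ)) / 2) * (((2 * Real.sin (Real.pi/5) : ℝ) : ℂ)
        + ((2 * Real.sin (2*Real.pi/5) : ℝ) : ℂ) * I)
      = ((1 - I * (κ:ℂ)) / 2) * (I * ((Real.sqrt 5 : ℝ) : ℂ)) := by
  obtain ⟨h1, h2⟩ := kappa_eqs
  rw [← hκ] at h1 h2
  have h1c := congrArg (Complex.ofReal) h1
  have h2c := congrArg (Complex.ofReal) h2
  simp only [Complex.ofReal_sub, Complex.ofReal_add, Complex.ofReal_mul, Complex.ofReal_div,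
    Complex.ofReal_neg, Complex.ofReal_ofNat] at h1c h2c
  simp only [Complex.ofReal_mul, Complex.ofReal_ofNat]
  linear_combination (-1 : ℂ) * h1c + I * h2c
    + ((κ:ℂ) * ((Real.sin (2*Real.pi/5) : ℝ) : ℂ)
      + (κ:ℂ) * ((Real.sqrt 5 : ℝ) : ℂ)/2) * Complex.I_sq

private lemma rel1 (χ : DirichletCharacter ℂ 5) (hχ : χ 2 = I) (hodd : χ.Odd) (κ : ℝ)
    (hκ : κ = (Real.sqrt (10 - 2 * Real.sqrt 5) - 2) / (Real.sqrt 5 - 1)) :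
    ((1 - I * (κ:ℂ)) / 2) * DirichletCharacter.rootNumber χ = (1 + I * (κ:ℂ)) / 2 := by
  have hX : (I * ((Real.sqrt 5 : ℝ) : ℂ)) ≠ 0 :=
    mul_ne_zero I_ne_zero (Complex.ofReal_ne_zero.mpr
      (by positivity : (0:ℝ) < Real.sqrt 5).ne')
  rw [DirichletCharacter.rootNumber, if_neg hodd.not_even, pow_one, sqrt5_pow,
    gauss_chi χ hχ, div_div, ← mul_div_assoc, div_eq_iff hX]
  exact key_tau κ hκ

private lemma rel2 (χ χbar : DirichletCharacter ℂ 5) (hχ : χ 2 = I)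
    (hbar : ∀ n : ZMod 5, χbar n = (starRingEnd ℂ) (χ n)) (hodd : χbar.Odd) (κ : ℝ)
    (hκ : κ = (Real.sqrt (10 - 2 * Real.sqrt 5) - 2) / (Real.sqrt 5 - 1)) :
    ((1 + I * (κ:ℂ)) / 2) * DirichletCharacter.rootNumber χbar = (1 - I * (κ:ℂ)) / 2 := by
  have hX : (I * ((Real.sqrt 5 : ℝ) : ℂ)) ≠ 0 :=
    mul_ne_zero I_ne_zero (Complex.ofReal_ne_zero.mpr
      (by positivity : (0:ℝ) < Real.sqrt 5).ne')
  rw [DirichletCharacter.rootNumber, if_neg hodd.not_even, pow_one, sqrt5_pow,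
    gauss_chibar χ χbar hχ hbar, div_div, ← mul_div_assoc, div_eq_iff hX]
  exact key_tau' κ hκ

/-- The non-trivial zeros of the Davenport–Heilbronn function are symmetric
with respect to the critical line `Re s = 1/2`. -/
theorem davenport_heilbronn_zeros_symmetric
    (χ χbar : DirichletCharacter ℂ 5)
    (hχ : χ 2 = I)
    (hbar : ∀ n : ZMod 5, χbar n = (starRingEnd ℂ) (χ n))
    (κ : ℝ) (hκ : κ = (Real.sqrt (10 - 2 * Real.sqrt 5) - 2) / (Real.sqrt 5 - 1))
    (f : ℂ → ℂ)
    (hf : ∀ s : ℂ, f s = ((1 - I * κ) / 2) * DirichletCharacter.LFunction χ s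
        + ((1 + I * κ) / 2) * DirichletCharacter.LFunction χbar s) :
    ∀ s₀ : ℂ, 0 < s₀.re → s₀.re < 1 → f s₀ = 0 →
      f (1 - (starRingEnd ℂ) s₀) = 0 := by
  intro s₀ hre0 hre1 hzero
  obtain ⟨hv0, hv1, hv3, hv4⟩ := chi_vals χ hχ
  have hIne1 : (I : ℂ) ≠ 1 := by
    intro h; simpa using congrArg Complex.im h
  have hbar2 : χbar 2 = -I := by rw [hbar, hχ]; simp
  have hχ1 : χ ≠ 1 := by
    intro h; rw [h, MulChar.one_apply (by decide)] at hχ; exact hIne1 hχ.symm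
  have hχbar1 : χbar ≠ 1 := by
    intro h; rw [h, MulChar.one_apply (by decide)] at hbar2
    have := congrArg Complex.im hbar2; simp at this
  have hinv : χ⁻¹ = χbar := chibar_eq_inv χ χbar hχ hbar
  have hinv' : χbar⁻¹ = χ := by rw [← hinv, inv_inv]
  have hoddχ : χ.Odd := by
    show χ (-1) = -1
    rw [show (-1 : ZMod 5) = 4 from by decide, hv4]
  have hoddχbar : χbar.Odd := by
    show χbar (-1) = -1
    rw [show (-1 : ZMod 5) = 4 from by decide, hbar, hv4]; simp
  have hprimχ : χ.IsPrimitive := chi_primitive χ (by rw [hχ]; exact hIne1)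
  have hprimχbar : χbar.IsPrimitive := chi_primitive χbar (by
    rw [hbar2]; intro h; have := congrArg Complex.im h; simp at this)
  have hbar' : ∀ n : ZMod 5, χ n = (starRingEnd ℂ) (χbar n) := fun n => by
    rw [hbar]; simp
  set t : ℂ := (starRingEnd ℂ) s₀ with ht
  have hct : (starRingEnd ℂ) t = s₀ := Complex.conj_conj s₀
  have hft : ((1 - I * (κ:ℂ)) / 2) * DirichletCharacter.LFunction χ t
      + ((1 + I * (κ:ℂ)) / 2) * DirichletCharacter.LFunction χbar t = 0 := by
    have hA := aux_LFunction_conj χ χbar hχ1 hχbar1 hbar t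
    have hB := aux_LFunction_conj χbar χ hχbar1 hχ1 hbar' t
    rw [hct] at hA hB
    have h0' := hzero
    rw [hf] at h0'
    have hconj := congrArg (starRingEnd ℂ) h0'
    simp only [map_add, map_mul, map_zero, map_div₀, map_sub, map_one, Complex.conj_I,
      Complex.conj_ofReal, map_ofNat] at hconj
    rw [hA, hB]
    linear_combination hconj
  have htre : t.re = s₀.re := by simp [ht]
  have hG : Complex.Gammaℝ (t + 1) ≠ 0 := by
    apply Complex.Gammaℝ_ne_zero_of_re_pos
    simp only [Complex.add_re, Complex.one_re, htre]
    linarith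
  have hΛχ : DirichletCharacter.completedLFunction χ t
      = DirichletCharacter.LFunction χ t * Complex.Gammaℝ (t + 1) := by
    rw [DirichletCharacter.LFunction_eq_completed_div_gammaFactor χ t (Or.inr (by norm_num)),
      hoddχ.gammaFactor_def, div_mul_cancel₀ _ hG]
  have hΛχbar : DirichletCharacter.completedLFunction χbar t
      = DirichletCharacter.LFunction χbar t * Complex.Gammaℝ (t + 1) := by
    rw [DirichletCharacter.LFunction_eq_completed_div_gammaFactor χbar t (Or.inr (by norm_num)),
      hoddχbar.gammaFactor_def, div_mul_cancel₀ _ hG]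
  have hfun1 := hprimχ.completedLFunction_one_sub t
  rw [hinv] at hfun1
  have hfun2 := hprimχbar.completedLFunction_one_sub t
  rw [hinv'] at hfun2
  have hrel1 := rel1 χ hχ hoddχ κ hκ
  have hrel2 := rel2 χ χbar hχ hbar hoddχbar κ hκ
  have hL1 : DirichletCharacter.LFunction χ (1 - t)
      = DirichletCharacter.completedLFunction χ (1 - t) / Complex.Gammaℝ (1 - t + 1) := by
    rw [DirichletCharacter.LFunction_eq_completed_div_gammaFactor χ _ (Or.inr (by norm_num)),
      hoddχ.gammaFactor_def]
  have hL2 : DirichletCharacter.LFunction χbar (1 - t)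
      = DirichletCharacter.completedLFunction χbar (1 - t) / Complex.Gammaℝ (1 - t + 1) := by
    rw [DirichletCharacter.LFunction_eq_completed_div_gammaFactor χbar _ (Or.inr (by norm_num)),
      hoddχbar.gammaFactor_def]
  rw [hf, hL1, hL2, hfun1, hfun2, hΛχ, hΛχbar]
  set C : ℂ := ((5:ℕ):ℂ) ^ (t - 1/2) with hC
  set G : ℂ := Complex.Gammaℝ (t + 1) with hGdef
  set G' : ℂ := Complex.Gammaℝ (1 - t + 1) with hG'def
  linear_combination (C * G / G') * hft
    + (C * (DirichletCharacter.LFunction χbar t) * G / G') * hrel1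
    + (C * (DirichletCharacter.LFunction χ t) * G / G') * hrel2
end
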